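/- Let Y be a stationary process on a probability space with measure-preserving ergodic-decomposable shift, taking values in [0,∞]. Then P({|Y₀| ≠ ∞} ∩ {|Y_k| → ∞ as k → -∞}) = 0; that is, on the event that |Y_k| tends to infinity as k → -∞, Y₀ must be infinite almost surely. -/

import Mathlib

open MeasureTheory Filter
open scoped ENNReal

/-- for a stationary `[0,∞]`-valued process, on the event that
`Y_k → ∞` as `k → -∞`, necessarily `Y₀ = ∞` a.s. -/
theorem stmt_10 {Ω : Type*} [MeasurableSpace Ω] (P : Measure Ω) [IsProbabilityMeasure P]
    (θ : Ω → Ω) (hθ : MeasurePreserving θ P P)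
    (Y : ℤ → Ω → ℝ≥0∞) (hYm : ∀ n, Measurable (Y n))
    (hYs : ∀ n, Y (n + 1) = Y n ∘ θ) :
    P {ω | Y 0 ω ≠ ⊤ ∧ Tendsto (fun k : ℕ => Y (-(k : ℤ)) ω) atTop (nhds ⊤)} = 0 := by
  -- iterate formula
  have hiter : ∀ (j : ℕ) (n : ℤ) (ω : Ω), Y n (θ^[j] ω) = Y (n + j) ω := by
    intro j
    induction j with
    | zero => intro n ω; simp
    | succ j ih =>
      intro n ω
      rw [Function.iterate_succ, Function.comp_apply, ih]
      have : Y (n + (j : ℤ) + 1) = Y (n + (j : ℤ)) ∘ θ := hYs _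
      have h2 : Y (n + (j : ℤ)) (θ ω) = Y (n + (j : ℤ) + 1) ω := by
        rw [this]; rfl
      rw [h2]
      congr 1
      push_cast
      ring
  -- the basic sets
  set F : ℕ → ℕ → Set Ω := fun M N =>
    {ω | Y 0 ω ≤ M ∧ ∀ k : ℕ, N ≤ k → (M : ℝ≥0∞) < Y (-(k : ℤ)) ω} with hF
  have hFmeas : ∀ M N, MeasurableSet (F M N) := by
    intro M N
    have : F M N = {ω | Y 0 ω ≤ M} ∩ ⋂ (k : ℕ) (_ : N ≤ k),
        {ω | (M : ℝ≥0∞) < Y (-(k : ℤ)) ω} := by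
      ext ω; simp [hF, Set.mem_iInter]
    rw [this]
    exact (measurableSet_le (hYm 0) measurable_const).inter
      (MeasurableSet.iInter fun k => MeasurableSet.iInter fun _ =>
        measurableSet_lt measurable_const (hYm _))
  -- each F M N is null
  have hFnull : ∀ M N, P (F M N) = 0 := by
    intro M N
    set G : ℕ → Set Ω := fun j => (θ^[j * (N + 1)]) ⁻¹' (F M N) with hG
    have hGmeas : ∀ j, MeasurableSet (G j) :=
      fun j => (hθ.iterate (j * (N + 1))).measurable (hFmeas M N)
    have hGmeasure : ∀ j, P (G j) = P (F M N) :=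
      fun j => (hθ.iterate (j * (N + 1))).measure_preimage (hFmeas M N).nullMeasurableSet
    have key : ∀ i j : ℕ, i < j → Disjoint (G i) (G j) := by
      intro i j hlt
      rw [Set.disjoint_left]
      rintro ω ⟨hi1, hi2⟩ ⟨hj1, hj2⟩
      -- from G i : Y (i*(N+1)) ω ≤ M
      have h1 : Y ((i * (N + 1) : ℕ) : ℤ) ω ≤ M := by
        have := hi1
        simpa [hiter] using (hi1 : Y 0 (θ^[i * (N + 1)] ω) ≤ M)
      -- from G j with k = (j - i)*(N+1)
      have hk : N ≤ (j - i) * (N + 1) := by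
        have : 1 ≤ j - i := by omega
        calc N ≤ 1 * (N + 1) := by omega
          _ ≤ (j - i) * (N + 1) := Nat.mul_le_mul_right _ this
      have h2 : (M : ℝ≥0∞) < Y (-(((j - i) * (N + 1) : ℕ) : ℤ)) (θ^[j * (N + 1)] ω) :=
        hj2 _ hk
      rw [hiter] at h2
      have hle : i * (N + 1) ≤ j * (N + 1) := Nat.mul_le_mul_right _ hlt.le
      have hnat : ((j - i) * (N + 1) : ℕ) = j * (N + 1) - i * (N + 1) :=
        Nat.sub_mul j i (N + 1)
      have heq : (-(((j - i) * (N + 1) : ℕ) : ℤ) + ((j * (N + 1) : ℕ) : ℤ))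
          = ((i * (N + 1) : ℕ) : ℤ) := by
        rw [hnat, Nat.cast_sub hle]; ring
      rw [heq] at h2
      exact absurd h1 (not_le.mpr h2)
    have hdisj : Pairwise (Function.onFun Disjoint G) := by
      intro i j hij
      rcases lt_or_gt_of_ne hij with h | h
      · exact key i j h
      · exact (key j i h).symm
    have hsum : ∑' j : ℕ, P (F M N) ≤ 1 := by
      rw [← tsum_congr hGmeasure, ← measure_iUnion hdisj hGmeas]
      exact prob_le_one
    by_contra h
    rw [ENNReal.tsum_const_eq_top_of_ne_zero h] at hsum
    exact absurd hsum (by simp)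
  -- cover the target set
  have hcover : {ω | Y 0 ω ≠ ⊤ ∧ Tendsto (fun k : ℕ => Y (-(k : ℤ)) ω) atTop (nhds ⊤)}
      ⊆ ⋃ (M : ℕ) (N : ℕ), F M N := by
    rintro ω ⟨h0, htend⟩
    obtain ⟨M, hM⟩ := ENNReal.exists_nat_gt h0
    have hev := (ENNReal.tendsto_nhds_top_iff_nat.mp htend) M
    obtain ⟨N, hN⟩ := hev.exists_forall_of_atTop
    refine Set.mem_iUnion.mpr ⟨M, Set.mem_iUnion.mpr ⟨N, ?_, ?_⟩⟩
    · exact hM.le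
    · exact fun k hk => hN k hk
  refine le_antisymm ?_ zero_le
  calc P _ ≤ P (⋃ (M : ℕ) (N : ℕ), F M N) := measure_mono hcover
    _ ≤ ∑' M : ℕ, P (⋃ N : ℕ, F M N) := measure_iUnion_le _
    _ ≤ ∑' M : ℕ, ∑' N : ℕ, P (F M N) := ENNReal.tsum_le_tsum fun M => measure_iUnion_le _
    _ = 0 := by simp [hFnull]
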